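/- Let (G, K_D) be a deterministic mass action system on n species. If (G, K_D) has a positive complex balanced state c ∈ ℝ^n_{>0}, then within every positive stoichiometric compatibility class of (G, K_D) there exists exactly one positive equilibrium, and every equilibrium of (G, K_D) is a complex balanced state. -/

import Mathlib

open scoped ENNReal NNReal BigOperators Classical

noncomputable section

namespace CRN

/-- A complex: a vector in `ℤ_{≥0}^n`. -/
abbrev Cplx (n : ℕ) := Fin n → ℕ

/-- A reaction: an ordered pair of complexes (source, target). -/
abbrev Reaction (n : ℕ) := Cplx n × Cplx n

/-- A reaction network on `n` species: a finite set of reactions, each with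
distinct source and target. -/
structure Network (n : ℕ) where
  R : Finset (Reaction n)
  ne_src_tgt : ∀ r ∈ R, r.1 ≠ r.2

/-- The complexes of a network: vectors occurring as source or target of some reaction. -/
def Network.C {n : ℕ} (G : Network n) : Finset (Cplx n) :=
  G.R.image Prod.fst ∪ G.R.image Prod.snd

/-- A network is reversible if `y → y' ∈ R` implies `y' → y ∈ R`. -/
def Network.Reversible {n : ℕ} (G : Network n) : Prop :=
  ∀ r ∈ G.R, (r.2, r.1) ∈ G.R

/-- A network is weakly reversible if every reaction is contained in a closed
directed path `y_1 → y_2 → ⋯ → y_k` with `k ≥ 2` and `y_1 = y_k`. -/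
def Network.WeaklyReversible {n : ℕ} (G : Network n) : Prop :=
  ∀ r ∈ G.R, ∃ (k : ℕ) (ys : ℕ → Cplx n), 2 ≤ k ∧ ys 0 = ys (k - 1) ∧
    (∀ i, i < k - 1 → (ys i, ys (i + 1)) ∈ G.R) ∧
    (∃ i, i < k - 1 ∧ (ys i, ys (i + 1)) = r)

/-- Embedding of a complex into `ℝ^n`. -/
def toR {n : ℕ} (y : Cplx n) : Fin n → ℝ := fun i => (y i : ℝ)

/-- Embedding of a complex into `ℤ^n`. -/
def toZ {n : ℕ} (y : Cplx n) : Fin n → ℤ := fun i => (y i : ℤ)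

/-- Deterministic kinetics: a nonnegative rate function for each reaction,
zero for pairs which are not reactions of the network. -/
structure DetKin {n : ℕ} (G : Network n) where
  rate : Reaction n → (Fin n → ℝ) → ℝ
  nonneg : ∀ r z, 0 ≤ rate r z
  zero_off : ∀ r, r ∉ G.R → ∀ z, rate r z = 0

/-- Stochastic kinetics: a nonnegative rate function on `ℤ^n` for each reaction,
zero for pairs which are not reactions of the network. -/
structure StochKin {n : ℕ} (G : Network n) where
  rate : Reaction n → (Fin n → ℤ) → ℝ≥0
  zero_off : ∀ r, r ∉ G.R → ∀ x, rate r x = 0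

namespace Det

variable {n : ℕ} {G : Network n}

/-- `c` is an equilibrium: `∑_{y→y'∈R} (y'−y) λ_{y→y'}(c) = 0`. -/
def IsEquilibrium (Λ : DetKin G) (c : Fin n → ℝ) : Prop :=
  ∑ r ∈ G.R, Λ.rate r c • (toR r.2 - toR r.1) = 0

/-- `c` is reaction balanced (detailed balanced). -/
def ReactionBalanced (Λ : DetKin G) (c : Fin n → ℝ) : Prop :=
  ∀ y ∈ G.C, ∀ y' ∈ G.C, Λ.rate (y, y') c = Λ.rate (y', y) c

/-- `c` is complex balanced. -/
def ComplexBalanced (Λ : DetKin G) (c : Fin n → ℝ) : Prop :=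
  ∀ y ∈ G.C, ∑ y' ∈ G.C, Λ.rate (y, y') c = ∑ y' ∈ G.C, Λ.rate (y', y) c

/-- `c` is reaction vector balanced. -/
def RVBalanced (Λ : DetKin G) (c : Fin n → ℝ) : Prop :=
  ∀ ξ : Fin n → ℝ,
    ∑ r ∈ G.R.filter (fun r => toR r.2 - toR r.1 = ξ), Λ.rate r c =
    ∑ r ∈ G.R.filter (fun r => toR r.2 - toR r.1 = -ξ), Λ.rate r c

/-- `c` is cycle balanced. -/
def CycleBalanced (Λ : DetKin G) (c : Fin n → ℝ) : Prop :=
  ∀ j : ℕ, 3 ≤ j → ∀ ys : ℕ → Cplx n,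
    (∀ i < j, ys i ∈ G.C) →
    (∀ i < j, ∀ k < j, ys i = ys k → i = k) →
    ∏ i ∈ Finset.range j, Λ.rate (ys i, ys ((i + 1) % j)) c =
    ∏ i ∈ Finset.range j, Λ.rate (ys ((i + 1) % j), ys i) c

/-- The active subnetwork at a state `c`: the reactions with positive rate at `c`. -/
def activeSub (Λ : DetKin G) (c : Fin n → ℝ) : Network n :=
  ⟨G.R.filter (fun r => 0 < Λ.rate r c),
   fun r hr => G.ne_src_tgt r (Finset.mem_filter.mp hr).1⟩

end Det

/-- The stoichiometric subspace: the span of the reaction vectors. -/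
def stoichSubspace {n : ℕ} (G : Network n) : Submodule ℝ (Fin n → ℝ) :=
  Submodule.span ℝ ((fun r : Reaction n => toR r.2 - toR r.1) '' (G.R : Set (Reaction n)))

/-- The stoichiometric compatibility class of `v`: `(v + S) ∩ ℝ^n_{≥0}`. -/
def compatClass {n : ℕ} (G : Network n) (v : Fin n → ℝ) : Set (Fin n → ℝ) :=
  {z | z - v ∈ stoichSubspace G ∧ ∀ i, 0 ≤ z i}

/-- A measure on `ℤ^n`: a function with values in `[0,∞]`. -/
abbrev Meas (n : ℕ) := (Fin n → ℤ) → ℝ≥0∞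

namespace Stoch

variable {n : ℕ} {G : Network n}

def IsDistribution (π : Meas n) : Prop := ∑' x, π x = 1

def SigmaFinite (π : Meas n) : Prop := ∀ x, π x < ⊤

def FiniteMeas (π : Meas n) : Prop := ∑' x, π x < ⊤

def supp (π : Meas n) : Set (Fin n → ℤ) := {x | π x ≠ 0}

/-- `π` is within `Γ` if its support is nonempty and contained in `Γ`. -/
def Within (π : Meas n) (Γ : Set (Fin n → ℤ)) : Prop := (supp π).Nonempty ∧ supp π ⊆ Γ

/-- `π` is a stationary measure. -/
def Stationary (Λ : StochKin G) (π : Meas n) : Prop :=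
  ∀ x : Fin n → ℤ,
    π x * ∑ r ∈ G.R, (Λ.rate r x : ℝ≥0∞) =
    ∑ r ∈ G.R, π (x + toZ r.1 - toZ r.2) * (Λ.rate r (x + toZ r.1 - toZ r.2) : ℝ≥0∞)

def StationaryDistribution (Λ : StochKin G) (π : Meas n) : Prop :=
  IsDistribution π ∧ Stationary Λ π

/-- `π` is a reaction balanced measure. -/
def ReactionBalancedM (Λ : StochKin G) (π : Meas n) : Prop :=
  ∀ x : Fin n → ℤ, ∀ y ∈ G.C, ∀ y' ∈ G.C,
    π x * (Λ.rate (y, y') x : ℝ≥0∞) =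
    π (x + toZ y' - toZ y) * (Λ.rate (y', y) (x + toZ y' - toZ y) : ℝ≥0∞)

/-- `π` is a complex balanced measure. -/
def ComplexBalancedM (Λ : StochKin G) (π : Meas n) : Prop :=
  ∀ x : Fin n → ℤ, ∀ y ∈ G.C,
    π x * ∑ y' ∈ G.C, (Λ.rate (y, y') x : ℝ≥0∞) =
    ∑ y' ∈ G.C, π (x + toZ y' - toZ y) * (Λ.rate (y', y) (x + toZ y' - toZ y) : ℝ≥0∞)

/-- `π` is a reaction vector balanced measure (detailed balanced as a Markov chain). -/
def RVBalancedM (Λ : StochKin G) (π : Meas n) : Prop :=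
  ∀ x : Fin n → ℤ, ∀ ξ : Fin n → ℤ,
    π x * ∑ r ∈ G.R.filter (fun r => toZ r.2 - toZ r.1 = ξ), (Λ.rate r x : ℝ≥0∞) =
    π (x + ξ) * ∑ r ∈ G.R.filter (fun r => toZ r.2 - toZ r.1 = -ξ), (Λ.rate r (x + ξ) : ℝ≥0∞)

/-- `π` is a cycle balanced measure. -/
def CycleBalancedM (Λ : StochKin G) (π : Meas n) : Prop :=
  ∀ x : Fin n → ℤ, ∀ j : ℕ, 3 ≤ j → ∀ ys : ℕ → Cplx n,
    (∀ i < j, ys i ∈ G.C) →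
    (∀ i < j, ∀ k < j, ys i = ys k → i = k) →
    ∏ i ∈ Finset.range j,
      π (x + toZ (ys i)) * (Λ.rate (ys i, ys ((i + 1) % j)) (x + toZ (ys i)) : ℝ≥0∞) =
    ∏ i ∈ Finset.range j,
      π (x + toZ (ys ((i + 1) % j))) *
        (Λ.rate (ys ((i + 1) % j), ys i) (x + toZ (ys ((i + 1) % j))) : ℝ≥0∞)

/-- One step of the dynamics: from `u`, an active reaction takes `u` to `u + y' - y`. -/
def Step (Λ : StochKin G) (u v : Fin n → ℤ) : Prop :=
  ∃ r ∈ G.R, 0 < Λ.rate r u ∧ v = u + toZ r.2 - toZ r.1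

/-- `u` is accessible from `x`. -/
def Accessible (Λ : StochKin G) (x u : Fin n → ℤ) : Prop :=
  Relation.ReflTransGen (Step Λ) x u

/-- `Γ` is an irreducible component. -/
def IrredComp (Λ : StochKin G) (Γ : Set (Fin n → ℤ)) : Prop :=
  Γ.Nonempty ∧ ∀ x ∈ Γ, ∀ u, Accessible Λ x u ↔ u ∈ Γ

/-- `Γ` is active: every reaction is active at some state of `Γ`. -/
def ActiveSet (Λ : StochKin G) (Γ : Set (Fin n → ℤ)) : Prop :=
  ∀ r ∈ G.R, ∃ x ∈ Γ, 0 < Λ.rate r x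

/-- The active subnetwork of `(G,Λ)` in `Γ`. -/
def activeSubnet (Λ : StochKin G) (Γ : Set (Fin n → ℤ)) : Network n :=
  ⟨G.R.filter (fun r => ∃ x ∈ Γ, 0 < Λ.rate r x),
   fun r hr => G.ne_src_tgt r (Finset.mem_filter.mp hr).1⟩

/-- `(G,Λ)` is a reaction balanced stochastic reaction system. -/
def SysReactionBalanced (Λ : StochKin G) : Prop :=
  (∃ π Γ, StationaryDistribution Λ π ∧ IrredComp Λ Γ ∧ ActiveSet Λ Γ ∧ Within π Γ) ∧
  ∀ π Γ, StationaryDistribution Λ π → IrredComp Λ Γ → ActiveSet Λ Γ → Within π Γ →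
    ReactionBalancedM Λ π

/-- `(G,Λ)` is a complex balanced stochastic reaction system. -/
def SysComplexBalanced (Λ : StochKin G) : Prop :=
  (∃ π Γ, StationaryDistribution Λ π ∧ IrredComp Λ Γ ∧ ActiveSet Λ Γ ∧ Within π Γ) ∧
  ∀ π Γ, StationaryDistribution Λ π → IrredComp Λ Γ → ActiveSet Λ Γ → Within π Γ →
    ComplexBalancedM Λ π

/-- `(G,Λ)` is a reaction vector balanced stochastic reaction system. -/
def SysRVBalanced (Λ : StochKin G) : Prop :=
  (∃ π Γ, StationaryDistribution Λ π ∧ IrredComp Λ Γ ∧ ActiveSet Λ Γ ∧ Within π Γ) ∧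
  ∀ π Γ, StationaryDistribution Λ π → IrredComp Λ Γ → ActiveSet Λ Γ → Within π Γ →
    RVBalancedM Λ π

/-- `(G,Λ)` is a cycle balanced stochastic reaction system. -/
def SysCycleBalanced (Λ : StochKin G) : Prop :=
  (∃ π Γ, StationaryDistribution Λ π ∧ IrredComp Λ Γ ∧ ActiveSet Λ Γ ∧ Within π Γ) ∧
  ∀ π Γ, StationaryDistribution Λ π → IrredComp Λ Γ → ActiveSet Λ Γ → Within π Γ →
    CycleBalancedM Λ π

end Stoch

/-- A mass action system: a network together with positive rate constants
(set to `0` off the reaction set, per the usual convention). -/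
structure MASystem (n : ℕ) where
  G : Network n
  κ : Reaction n → ℝ
  pos : ∀ r ∈ G.R, 0 < κ r
  zero_off : ∀ r, r ∉ G.R → κ r = 0

/-- The deterministic mass action kinetics: `λ_{y→y'}(z) = 1_{{z ≥ 0}} κ_{y→y'} z^y`. -/
def MASystem.detKin {n : ℕ} (S : MASystem n) : DetKin S.G where
  rate r z := (if ∀ i, 0 ≤ z i then (1 : ℝ) else 0) * S.κ r * ∏ i, z i ^ (r.1 i)
  nonneg r z := by
    have hκ : 0 ≤ S.κ r := by
      by_cases h : r ∈ S.G.R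
      · exact le_of_lt (S.pos r h)
      · exact le_of_eq (S.zero_off r h).symm
    by_cases h : ∀ i, 0 ≤ z i
    · have hp : (0 : ℝ) ≤ ∏ i, z i ^ (r.1 i) :=
        Finset.prod_nonneg fun i _ => pow_nonneg (h i) _
      simp only [if_pos h, one_mul]
      exact mul_nonneg hκ hp
    · simp [if_neg h]
  zero_off r hr z := by simp [S.zero_off r hr]

/-- The stochastic mass action kinetics:
`λ_{y→y'}(x) = κ_{y→y'} · (x!/(x−y)!) · 1_{{x ≥ y}}`. -/
def MASystem.stochKin {n : ℕ} (S : MASystem n) : StochKin S.G where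
  rate r x :=
    if ∀ i, (r.1 i : ℤ) ≤ x i then
      (S.κ r).toNNReal *
        (((∏ i, ∏ j ∈ Finset.range (r.1 i), (x i - (j : ℤ))).toNat : ℝ≥0))
    else 0
  zero_off r hr x := by simp [S.zero_off r hr]

namespace Det

/-- `(G,K_D)` is a reaction balanced deterministic mass action system. -/
def SysReactionBalanced {n : ℕ} (S : MASystem n) : Prop :=
  (∃ c : Fin n → ℝ, (∀ i, 0 < c i) ∧ IsEquilibrium S.detKin c) ∧
  ∀ c : Fin n → ℝ, (∀ i, 0 < c i) → IsEquilibrium S.detKin c → ReactionBalanced S.detKin c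

/-- `(G,K_D)` is a complex balanced deterministic mass action system. -/
def SysComplexBalanced {n : ℕ} (S : MASystem n) : Prop :=
  (∃ c : Fin n → ℝ, (∀ i, 0 < c i) ∧ IsEquilibrium S.detKin c) ∧
  ∀ c : Fin n → ℝ, (∀ i, 0 < c i) → IsEquilibrium S.detKin c → ComplexBalanced S.detKin c

/-- `(G,K_D)` is a cycle balanced deterministic mass action system. -/
def SysCycleBalanced {n : ℕ} (S : MASystem n) : Prop :=
  (∃ c : Fin n → ℝ, (∀ i, 0 < c i) ∧ IsEquilibrium S.detKin c) ∧
  ∀ c : Fin n → ℝ, (∀ i, 0 < c i) → IsEquilibrium S.detKin c → CycleBalanced S.detKin c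

end Det

end CRN

open CRN
namespace CBAux
open CRN Det

variable {n : ℕ}

/-- dot product on `ℝ^n`. -/
def dot (μ x : Fin n → ℝ) : ℝ := ∑ i, μ i * x i

lemma dot_sub (μ x y : Fin n → ℝ) : dot μ (x - y) = dot μ x - dot μ y := by
  simp [dot, Pi.sub_apply, mul_sub, Finset.sum_sub_distrib]

/-- `dot μ` as a linear map. -/
def lmap (μ : Fin n → ℝ) : (Fin n → ℝ) →ₗ[ℝ] ℝ where
  toFun := dot μ
  map_add' x y := by simp [dot, Pi.add_apply, mul_add, Finset.sum_add_distrib]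
  map_smul' a x := by
    simp only [dot, Pi.smul_apply, smul_eq_mul, RingHom.id_apply, Finset.mul_sum]
    exact Finset.sum_congr rfl fun i _ => by ring

lemma mem_C_fst {G : Network n} {r : Reaction n} (hr : r ∈ G.R) : r.1 ∈ G.C :=
  Finset.mem_union_left _ (Finset.mem_image_of_mem _ hr)

lemma mem_C_snd {G : Network n} {r : Reaction n} (hr : r ∈ G.R) : r.2 ∈ G.C :=
  Finset.mem_union_right _ (Finset.mem_image_of_mem _ hr)

lemma sum_rate_fst {G : Network n} (Λ : DetKin G) (y : Cplx n) (z : Fin n → ℝ) :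
    ∑ y' ∈ G.C, Λ.rate (y, y') z = ∑ r ∈ G.R.filter (fun r => r.1 = y), Λ.rate r z := by
  rw [← Finset.sum_filter_of_ne (p := fun y' => (y, y') ∈ G.R)
    (fun y' _ hne => by by_contra h; exact hne (Λ.zero_off _ h _))]
  refine Finset.sum_nbij' (i := fun y' => (y, y')) (j := fun r => r.2) ?_ ?_ ?_ ?_ ?_
  · intro y' hy'
    simp only [Finset.mem_filter] at hy' ⊢
    simp [hy'.2]
  · intro r hr
    simp only [Finset.mem_filter] at hr ⊢
    exact ⟨mem_C_snd hr.1, by rw [← hr.2]; exact hr.1⟩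
  · intro y' _; rfl
  · intro r hr
    simp only [Finset.mem_filter] at hr
    obtain ⟨r1, r2⟩ := r
    simp only at hr ⊢
    rw [hr.2]
  · intro y' _; rfl

lemma sum_rate_snd {G : Network n} (Λ : DetKin G) (y : Cplx n) (z : Fin n → ℝ) :
    ∑ y' ∈ G.C, Λ.rate (y', y) z = ∑ r ∈ G.R.filter (fun r => r.2 = y), Λ.rate r z := by
  rw [← Finset.sum_filter_of_ne (p := fun y' => (y', y) ∈ G.R)
    (fun y' _ hne => by by_contra h; exact hne (Λ.zero_off _ h _))]
  refine Finset.sum_nbij' (i := fun y' => (y', y)) (j := fun r => r.1) ?_ ?_ ?_ ?_ ?_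
  · intro y' hy'
    simp only [Finset.mem_filter] at hy' ⊢
    simp [hy'.2]
  · intro r hr
    simp only [Finset.mem_filter] at hr ⊢
    exact ⟨mem_C_fst hr.1, by rw [← hr.2]; exact hr.1⟩
  · intro y' _; rfl
  · intro r hr
    simp only [Finset.mem_filter] at hr
    obtain ⟨r1, r2⟩ := r
    simp only at hr ⊢
    rw [hr.2]
  · intro y' _; rfl

/-- telescoping over a balanced reaction set -/
lemma telescope {G : Network n} (R' : Finset (Reaction n)) (hsub : R' ⊆ G.R)
    (K : Reaction n → ℝ)
    (hbal : ∀ y ∈ G.C, ∑ r ∈ R'.filter (fun r => r.1 = y), K r =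
      ∑ r ∈ R'.filter (fun r => r.2 = y), K r)
    (F : Cplx n → ℝ) :
    ∑ r ∈ R', K r * F r.1 = ∑ r ∈ R', K r * F r.2 := by
  rw [← Finset.sum_fiberwise_of_maps_to (g := Prod.fst) (t := G.C)
      (fun r hr => mem_C_fst (hsub hr)) (fun r => K r * F r.1),
    ← Finset.sum_fiberwise_of_maps_to (g := Prod.snd) (t := G.C)
      (fun r hr => mem_C_snd (hsub hr)) (fun r => K r * F r.2)]
  refine Finset.sum_congr rfl fun y hy => ?_
  have h1 : ∑ r ∈ R'.filter (fun r => r.1 = y), K r * F r.1 =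
      F y * ∑ r ∈ R'.filter (fun r => r.1 = y), K r := by
    rw [Finset.mul_sum]
    refine Finset.sum_congr rfl fun r hr => ?_
    rw [(Finset.mem_filter.mp hr).2]; ring
  have h2 : ∑ r ∈ R'.filter (fun r => r.2 = y), K r * F r.2 =
      F y * ∑ r ∈ R'.filter (fun r => r.2 = y), K r := by
    rw [Finset.mul_sum]
    refine Finset.sum_congr rfl fun r hr => ?_
    rw [(Finset.mem_filter.mp hr).2]; ring
  rw [h1, h2, hbal y hy]

section MAS
variable (S : MASystem n) (c : Fin n → ℝ)

lemma rate_of_nonneg {z : Fin n → ℝ} (hz : ∀ i, 0 ≤ z i) (r : Reaction n) :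
    S.detKin.rate r z = S.κ r * ∏ i, z i ^ (r.1 i) := by
  simp [MASystem.detKin, if_pos hz]

lemma rate_of_not_nonneg {z : Fin n → ℝ} (hz : ¬ ∀ i, 0 ≤ z i) (r : Reaction n) :
    S.detKin.rate r z = 0 := by
  simp [MASystem.detKin, if_neg hz]

/-- The "supported" predicate: the complex `y` only uses species present in `z`. -/
def ok (z : Fin n → ℝ) (y : Cplx n) : Prop := ∀ i, z i = 0 → y i = 0

lemma prodpow_pos {z : Fin n → ℝ} (hz : ∀ i, 0 ≤ z i) {y : Cplx n} (hy : ok z y) :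
    0 < ∏ i, z i ^ (y i) := by
  refine Finset.prod_pos fun i _ => ?_
  rcases (hz i).eq_or_lt with h | h
  · rw [hy i h.symm]; norm_num
  · exact pow_pos h _

lemma prodpow_zero {z : Fin n → ℝ} (hz : ∀ i, 0 ≤ z i) {y : Cplx n} (hy : ¬ ok z y) :
    ∏ i, z i ^ (y i) = 0 := by
  unfold ok at hy
  push_neg at hy
  obtain ⟨i, hzi, hyi⟩ := hy
  exact Finset.prod_eq_zero (Finset.mem_univ i) (by rw [hzi, zero_pow hyi])

/-- The exponent vector `μ = log (z/c)` on the support of `z`. -/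
def mu (z : Fin n → ℝ) : Fin n → ℝ :=
  fun i => if 0 < z i then Real.log (z i / c i) else 0

lemma prodpow_eq_exp (hc : ∀ i, 0 < c i) {z : Fin n → ℝ} (hz : ∀ i, 0 ≤ z i)
    {y : Cplx n} (hy : ok z y) :
    ∏ i, z i ^ (y i) = (∏ i, c i ^ (y i)) * Real.exp (dot (mu c z) (toR y)) := by
  have : Real.exp (dot (mu c z) (toR y)) = ∏ i, Real.exp (mu c z i * (y i : ℝ)) := by
    rw [dot, Real.exp_sum]
    exact Finset.prod_congr rfl fun i _ => by rw [toR]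
  rw [this, ← Finset.prod_mul_distrib]
  refine Finset.prod_congr rfl fun i _ => ?_
  rcases (hz i).eq_or_lt with h | h
  · rw [hy i h.symm]; simp [mu, ← h, toR]
  · have hcne : c i ≠ 0 := (hc i).ne'
    have : mu c z i = Real.log (z i / c i) := if_pos h
    have hpos : 0 < z i / c i := div_pos h (hc i)
    rw [this, mul_comm (Real.log (z i / c i)), Real.exp_nat_mul, Real.exp_log hpos, div_pow]
    field_simp

/-- rate constant times monomial of `c`. -/
def Kc (r : Reaction n) : ℝ := S.κ r * ∏ i, c i ^ (r.1 i)

variable {S c}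

lemma Kc_pos (hc : ∀ i, 0 < c i) {r : Reaction n} (hr : r ∈ S.G.R) : 0 < Kc S c r :=
  mul_pos (S.pos r hr) (Finset.prod_pos fun i _ => pow_pos (hc i) _)

lemma rate_eq_Kc_exp (hc : ∀ i, 0 < c i) {z : Fin n → ℝ} (hz : ∀ i, 0 ≤ z i)
    {r : Reaction n} (hok : ok z r.1) :
    S.detKin.rate r z = Kc S c r * Real.exp (dot (mu c z) (toR r.1)) := by
  rw [rate_of_nonneg S hz, prodpow_eq_exp c hc hz hok, Kc, mul_assoc]

lemma rate_zero_of_not_ok {z : Fin n → ℝ} (hz : ∀ i, 0 ≤ z i)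
    {r : Reaction n} (hok : ¬ ok z r.1) : S.detKin.rate r z = 0 := by
  rw [rate_of_nonneg S hz, prodpow_zero hz hok, mul_zero]

lemma rate_pos_of_ok {z : Fin n → ℝ} (hz : ∀ i, 0 ≤ z i)
    {r : Reaction n} (hr : r ∈ S.G.R) (hok : ok z r.1) : 0 < S.detKin.rate r z := by
  rw [rate_of_nonneg S hz]
  exact mul_pos (S.pos r hr) (prodpow_pos hz hok)

lemma cb_reaction (hc : ∀ i, 0 < c i) (hcb : Det.ComplexBalanced S.detKin c) :
    ∀ y ∈ S.G.C, ∑ r ∈ S.G.R.filter (fun r => r.1 = y), Kc S c r =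
      ∑ r ∈ S.G.R.filter (fun r => r.2 = y), Kc S c r := by
  intro y hy
  have h := hcb y hy
  rw [sum_rate_fst, sum_rate_snd] at h
  have e : ∀ r : Reaction n, S.detKin.rate r c = Kc S c r := fun r =>
    rate_of_nonneg S (fun i => (hc i).le) r
  calc ∑ r ∈ S.G.R.filter (fun r => r.1 = y), Kc S c r
      = ∑ r ∈ S.G.R.filter (fun r => r.1 = y), S.detKin.rate r c :=
        Finset.sum_congr rfl fun r _ => (e r).symm
    _ = ∑ r ∈ S.G.R.filter (fun r => r.2 = y), S.detKin.rate r c := h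
    _ = ∑ r ∈ S.G.R.filter (fun r => r.2 = y), Kc S c r :=
        Finset.sum_congr rfl fun r _ => e r

/-- The core lemma: at any nonnegative equilibrium, `dot μ` is constant along
active reactions, and the state is complex balanced. -/
lemma core (hc : ∀ i, 0 < c i) (hcb : Det.ComplexBalanced S.detKin c)
    {z : Fin n → ℝ} (hz : ∀ i, 0 ≤ z i) (heq : Det.IsEquilibrium S.detKin z) :
    (∀ r ∈ S.G.R, ok z r.1 →
      dot (mu c z) (toR r.2) = dot (mu c z) (toR r.1)) ∧
    Det.ComplexBalanced S.detKin z := by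
  have hcbR := cb_reaction hc hcb
  have hcoord : ∀ i, ∑ r ∈ S.G.R, S.detKin.rate r z * (toR r.2 i - toR r.1 i) = 0 := by
    intro i
    have h0 := congrFun heq i
    simpa [Finset.sum_apply, Pi.smul_apply, Pi.sub_apply, smul_eq_mul] using h0
  -- forward closure
  have hfwd : ∀ r ∈ S.G.R, ok z r.1 → ok z r.2 := by
    intro r hr hok i hzi
    by_contra hne
    have hterm : ∀ s ∈ S.G.R, 0 ≤ S.detKin.rate s z * (toR s.2 i - toR s.1 i) := by
      intro s _
      rcases (S.detKin.nonneg s z).eq_or_lt with h | h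
      · rw [← h, zero_mul]
      · have hoks : ok z s.1 := by
          by_contra hbad
          rw [rate_zero_of_not_ok hz hbad] at h
          exact lt_irrefl _ h
        have h1 : toR s.1 i = 0 := by simp [toR, hoks i hzi]
        rw [h1, sub_zero]
        exact mul_nonneg h.le (by simp [toR])
    have hall := (Finset.sum_eq_zero_iff_of_nonneg hterm).mp (hcoord i) r hr
    have hratepos : 0 < S.detKin.rate r z := rate_pos_of_ok hz hr hok
    have h2 : 0 < toR r.2 i - toR r.1 i := by
      have : toR r.1 i = 0 := by simp [toR, hok i hzi]
      rw [this, sub_zero]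
      have : 0 < r.2 i := Nat.pos_of_ne_zero hne
      simp only [toR]
      exact_mod_cast this
    nlinarith
  -- backward closure
  have hbwd : ∀ r ∈ S.G.R, ok z r.2 → ok z r.1 := by
    have hTU : ∑ r ∈ S.G.R.filter (fun r => ok z r.1), Kc S c r
        = ∑ r ∈ S.G.R.filter (fun r => ok z r.2), Kc S c r := by
      rw [Finset.sum_filter, Finset.sum_filter,
        ← Finset.sum_fiberwise_of_maps_to (g := Prod.fst) (t := S.G.C)
          (fun r hr => mem_C_fst hr) (fun r => if ok z r.1 then Kc S c r else 0),
        ← Finset.sum_fiberwise_of_maps_to (g := Prod.snd) (t := S.G.C)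
          (fun r hr => mem_C_snd hr) (fun r => if ok z r.2 then Kc S c r else 0)]
      refine Finset.sum_congr rfl fun y hy => ?_
      have e1 : ∑ r ∈ S.G.R.filter (fun r => r.1 = y), (if ok z r.1 then Kc S c r else 0)
          = if ok z y then ∑ r ∈ S.G.R.filter (fun r => r.1 = y), Kc S c r else 0 := by
        split_ifs with h
        · refine Finset.sum_congr rfl fun r hr => ?_
          rw [if_pos]
          rw [(Finset.mem_filter.mp hr).2]; exact h
        · refine Finset.sum_eq_zero fun r hr => ?_
          rw [if_neg]
          rw [(Finset.mem_filter.mp hr).2]; exact h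
      have e2 : ∑ r ∈ S.G.R.filter (fun r => r.2 = y), (if ok z r.2 then Kc S c r else 0)
          = if ok z y then ∑ r ∈ S.G.R.filter (fun r => r.2 = y), Kc S c r else 0 := by
        split_ifs with h
        · refine Finset.sum_congr rfl fun r hr => ?_
          rw [if_pos]
          rw [(Finset.mem_filter.mp hr).2]; exact h
        · refine Finset.sum_eq_zero fun r hr => ?_
          rw [if_neg]
          rw [(Finset.mem_filter.mp hr).2]; exact h
      rw [e1, e2]
      split_ifs with h
      · exact hcbR y hy
      · rfl
    intro r hr hok2
    by_contra hok1
    have hsub2 : S.G.R.filter (fun r => ok z r.1) ⊆ S.G.R.filter (fun r => ok z r.2) := by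
      intro s hs
      rw [Finset.mem_filter] at hs ⊢
      exact ⟨hs.1, hfwd s hs.1 hs.2⟩
    have hlt := Finset.sum_lt_sum_of_subset hsub2
      (i := r) (Finset.mem_filter.mpr ⟨hr, hok2⟩)
      (by rw [Finset.mem_filter]; exact fun hh => hok1 hh.2)
      (Kc_pos hc hr)
      (fun j hj _ => (Kc_pos hc (Finset.mem_filter.mp hj).1).le)
    exact absurd hTU (ne_of_lt hlt)
  -- the active reaction set
  set μ := mu c z with hμ
  set RA := S.G.R.filter (fun r => ok z r.1) with hRAdef
  have hRAsub : RA ⊆ S.G.R := Finset.filter_subset _ _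
  have hmemRA : ∀ {r : Reaction n}, r ∈ RA ↔ r ∈ S.G.R ∧ ok z r.1 := by
    intro r; rw [hRAdef, Finset.mem_filter]
  have hbalA : ∀ y ∈ S.G.C, ∑ r ∈ RA.filter (fun r => r.1 = y), Kc S c r =
      ∑ r ∈ RA.filter (fun r => r.2 = y), Kc S c r := by
    intro y hy
    by_cases h : ok z y
    · have e1 : RA.filter (fun r => r.1 = y) = S.G.R.filter (fun r => r.1 = y) := by
        ext r
        rw [hRAdef, Finset.filter_filter, Finset.mem_filter, Finset.mem_filter]
        constructor
        · rintro ⟨h1, _, h3⟩; exact ⟨h1, h3⟩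
        · rintro ⟨h1, h3⟩; exact ⟨h1, h3 ▸ h, h3⟩
      have e2 : RA.filter (fun r => r.2 = y) = S.G.R.filter (fun r => r.2 = y) := by
        ext r
        rw [hRAdef, Finset.filter_filter, Finset.mem_filter, Finset.mem_filter]
        constructor
        · rintro ⟨h1, _, h3⟩; exact ⟨h1, h3⟩
        · rintro ⟨h1, h3⟩; exact ⟨h1, hbwd r h1 (h3 ▸ h), h3⟩
      rw [e1, e2]
      exact hcbR y hy
    · have e1 : RA.filter (fun r => r.1 = y) = ∅ := by
        refine Finset.filter_eq_empty_iff.mpr fun {r} hrRA => ?_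
        intro h3
        exact h (h3 ▸ (hmemRA.mp hrRA).2)
      have e2 : RA.filter (fun r => r.2 = y) = ∅ := by
        refine Finset.filter_eq_empty_iff.mpr fun {r} hrRA => ?_
        intro h3
        obtain ⟨h1, h2⟩ := hmemRA.mp hrRA
        exact h (h3 ▸ hfwd r h1 h2)
      rw [e1, e2]
  -- telescope
  have hF8 : ∑ r ∈ RA, Kc S c r * Real.exp (dot μ (toR r.2)) =
      ∑ r ∈ RA, Kc S c r * Real.exp (dot μ (toR r.1)) :=
    (telescope RA hRAsub _ hbalA (fun y => Real.exp (dot μ (toR y)))).symm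
  -- dotting equilibrium with μ
  have hF9 : ∑ r ∈ RA, Kc S c r * Real.exp (dot μ (toR r.1)) *
      (dot μ (toR r.2) - dot μ (toR r.1)) = 0 := by
    have h1 : ∑ r ∈ S.G.R, S.detKin.rate r z * (dot μ (toR r.2) - dot μ (toR r.1)) = 0 := by
      have key : ∑ r ∈ S.G.R, S.detKin.rate r z * (dot μ (toR r.2) - dot μ (toR r.1))
          = ∑ i, μ i * (∑ r ∈ S.G.R, S.detKin.rate r z * (toR r.2 i - toR r.1 i)) := by
        simp_rw [Finset.mul_sum]
        rw [Finset.sum_comm]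
        refine Finset.sum_congr rfl fun r _ => ?_
        rw [dot, dot, ← Finset.sum_sub_distrib, Finset.mul_sum]
        exact Finset.sum_congr rfl fun i _ => by ring
      rw [key]
      simp_rw [hcoord]
      simp
    calc ∑ r ∈ RA, Kc S c r * Real.exp (dot μ (toR r.1)) *
          (dot μ (toR r.2) - dot μ (toR r.1))
        = ∑ r ∈ RA, S.detKin.rate r z * (dot μ (toR r.2) - dot μ (toR r.1)) :=
          Finset.sum_congr rfl fun r hr => by
            rw [rate_eq_Kc_exp hc hz (hmemRA.mp hr).2]
      _ = ∑ r ∈ S.G.R, S.detKin.rate r z * (dot μ (toR r.2) - dot μ (toR r.1)) :=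
          Finset.sum_subset hRAsub (fun r hrR hrnot => by
            rw [rate_zero_of_not_ok hz (fun hbad => hrnot (hmemRA.mpr ⟨hrR, hbad⟩)), zero_mul])
      _ = 0 := h1
  -- convexity: equality along active reactions
  have hab : ∀ r ∈ RA, dot μ (toR r.2) = dot μ (toR r.1) := by
    have hsum0 : ∑ r ∈ RA, Kc S c r * (Real.exp (dot μ (toR r.2)) -
        Real.exp (dot μ (toR r.1)) -
        Real.exp (dot μ (toR r.1)) * (dot μ (toR r.2) - dot μ (toR r.1))) = 0 := by
      have e : ∀ r ∈ RA, Kc S c r * (Real.exp (dot μ (toR r.2)) -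
          Real.exp (dot μ (toR r.1)) -
          Real.exp (dot μ (toR r.1)) * (dot μ (toR r.2) - dot μ (toR r.1)))
          = Kc S c r * Real.exp (dot μ (toR r.2)) - Kc S c r * Real.exp (dot μ (toR r.1))
            - Kc S c r * Real.exp (dot μ (toR r.1)) *
              (dot μ (toR r.2) - dot μ (toR r.1)) := fun r _ => by ring
      rw [Finset.sum_congr rfl e, Finset.sum_sub_distrib, Finset.sum_sub_distrib, hF8, hF9]
      ring
    have hnn : ∀ r ∈ RA, 0 ≤ Kc S c r * (Real.exp (dot μ (toR r.2)) -
        Real.exp (dot μ (toR r.1)) -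
        Real.exp (dot μ (toR r.1)) * (dot μ (toR r.2) - dot μ (toR r.1))) := by
      intro r hr
      have hK := Kc_pos hc (hRAsub hr)
      have h1 := Real.add_one_le_exp (dot μ (toR r.2) - dot μ (toR r.1))
      have hE : Real.exp (dot μ (toR r.2)) =
          Real.exp (dot μ (toR r.1)) * Real.exp (dot μ (toR r.2) - dot μ (toR r.1)) := by
        rw [← Real.exp_add]; ring_nf
      have key : 0 ≤ Real.exp (dot μ (toR r.1)) *
          (Real.exp (dot μ (toR r.2) - dot μ (toR r.1)) - 1 -
            (dot μ (toR r.2) - dot μ (toR r.1))) :=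
        mul_nonneg (Real.exp_pos _).le (by linarith)
      have key2 := mul_nonneg hK.le key
      nlinarith [key2]
    intro r hr
    have h0 := (Finset.sum_eq_zero_iff_of_nonneg hnn).mp hsum0 r hr
    by_contra hne
    have hlt := Real.add_one_lt_exp (sub_ne_zero.mpr hne)
    have hE : Real.exp (dot μ (toR r.2)) =
        Real.exp (dot μ (toR r.1)) * Real.exp (dot μ (toR r.2) - dot μ (toR r.1)) := by
      rw [← Real.exp_add]; ring_nf
    have hK := Kc_pos hc (hRAsub hr)
    have key : 0 < Real.exp (dot μ (toR r.1)) *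
        (Real.exp (dot μ (toR r.2) - dot μ (toR r.1)) - 1 -
          (dot μ (toR r.2) - dot μ (toR r.1))) :=
      mul_pos (Real.exp_pos _) (by linarith)
    have key2 := mul_pos hK key
    nlinarith [key2]
  refine ⟨fun r hr hok => hab r (hmemRA.mpr ⟨hr, hok⟩), ?_⟩
  -- complex balance at z
  intro y hy
  rw [sum_rate_fst, sum_rate_snd]
  by_cases hoky : ok z y
  · have e1 : ∑ r ∈ S.G.R.filter (fun r => r.1 = y), S.detKin.rate r z
        = Real.exp (dot μ (toR y)) * ∑ r ∈ S.G.R.filter (fun r => r.1 = y), Kc S c r := by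
      rw [Finset.mul_sum]
      refine Finset.sum_congr rfl fun r hr => ?_
      have hr1 := (Finset.mem_filter.mp hr).2
      rw [rate_eq_Kc_exp hc hz (hr1 ▸ hoky), hr1]
      ring
    have e2 : ∑ r ∈ S.G.R.filter (fun r => r.2 = y), S.detKin.rate r z
        = Real.exp (dot μ (toR y)) * ∑ r ∈ S.G.R.filter (fun r => r.2 = y), Kc S c r := by
      rw [Finset.mul_sum]
      refine Finset.sum_congr rfl fun r hr => ?_
      obtain ⟨hrR, hr2⟩ := Finset.mem_filter.mp hr
      have hok1 : ok z r.1 := hbwd r hrR (hr2 ▸ hoky)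
      rw [rate_eq_Kc_exp hc hz hok1, ← hab r (hmemRA.mpr ⟨hrR, hok1⟩), hr2]
      ring
    rw [e1, e2, hcbR y hy]
  · have e1 : ∑ r ∈ S.G.R.filter (fun r => r.1 = y), S.detKin.rate r z = 0 :=
      Finset.sum_eq_zero fun r hr =>
        rate_zero_of_not_ok hz ((Finset.mem_filter.mp hr).2 ▸ hoky)
    have e2 : ∑ r ∈ S.G.R.filter (fun r => r.2 = y), S.detKin.rate r z = 0 := by
      refine Finset.sum_eq_zero fun r hr => ?_
      obtain ⟨hrR, hr2⟩ := Finset.mem_filter.mp hr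
      rcases (S.detKin.nonneg r z).eq_or_lt with h | h
      · exact h.symm
      · exfalso
        have hok1 : ok z r.1 := by
          by_contra hbad
          rw [rate_zero_of_not_ok hz hbad] at h
          exact lt_irrefl _ h
        exact hoky (hr2 ▸ hfwd r hrR hok1)
    rw [e1, e2]


lemma ok_of_pos {z : Fin n → ℝ} (hz : ∀ i, 0 < z i) (y : Cplx n) : ok z y :=
  fun i hzi => absurd hzi (hz i).ne'

lemma mu_eq_log {z : Fin n → ℝ} (hc : ∀ i, 0 < c i) (hz : ∀ i, 0 < z i) (i : Fin n) :
    mu c z i = Real.log (z i) - Real.log (c i) := by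
  rw [mu, if_pos (hz i), Real.log_div (hz i).ne' (hc i).ne']

/-- Converse: a positive state whose log-ratio to `c` is orthogonal to the reaction
vectors is an equilibrium. -/
lemma equilibrium_of_perp (hc : ∀ i, 0 < c i) (hcb : Det.ComplexBalanced S.detKin c)
    {z : Fin n → ℝ} (hz : ∀ i, 0 < z i)
    (hperp : ∀ r ∈ S.G.R, dot (mu c z) (toR r.2) = dot (mu c z) (toR r.1)) :
    Det.IsEquilibrium S.detKin z := by
  have hz' : ∀ i, 0 ≤ z i := fun i => (hz i).le
  have hcbR := cb_reaction hc hcb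
  unfold Det.IsEquilibrium
  funext i
  simp only [Finset.sum_apply, Pi.smul_apply, Pi.sub_apply, smul_eq_mul, Pi.zero_apply]
  set μ := mu c z with hμ
  set K : Reaction n → ℝ := fun r => Kc S c r * Real.exp (dot μ (toR r.1)) with hK
  have hbal : ∀ y ∈ S.G.C, ∑ r ∈ S.G.R.filter (fun r => r.1 = y), K r =
      ∑ r ∈ S.G.R.filter (fun r => r.2 = y), K r := by
    intro y hy
    have e1 : ∑ r ∈ S.G.R.filter (fun r => r.1 = y), K r =
        Real.exp (dot μ (toR y)) * ∑ r ∈ S.G.R.filter (fun r => r.1 = y), Kc S c r := by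
      rw [Finset.mul_sum]
      refine Finset.sum_congr rfl fun r hr => ?_
      show Kc S c r * Real.exp (dot μ (toR r.1)) = _
      rw [(Finset.mem_filter.mp hr).2]
      ring
    have e2 : ∑ r ∈ S.G.R.filter (fun r => r.2 = y), K r =
        Real.exp (dot μ (toR y)) * ∑ r ∈ S.G.R.filter (fun r => r.2 = y), Kc S c r := by
      rw [Finset.mul_sum]
      refine Finset.sum_congr rfl fun r hr => ?_
      obtain ⟨hrR, hr2⟩ := Finset.mem_filter.mp hr
      show Kc S c r * Real.exp (dot μ (toR r.1)) = _
      rw [← hperp r hrR, hr2]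
      ring
    rw [e1, e2, hcbR y hy]
  have tele := telescope S.G.R subset_rfl K hbal (fun y => toR y i)
  have rate_eq : ∀ r : Reaction n, S.detKin.rate r z = K r := fun r =>
    rate_eq_Kc_exp hc hz' (ok_of_pos hz _)
  calc ∑ r ∈ S.G.R, S.detKin.rate r z * (toR r.2 i - toR r.1 i)
      = ∑ r ∈ S.G.R, (K r * toR r.2 i - K r * toR r.1 i) :=
        Finset.sum_congr rfl fun r _ => by rw [rate_eq r]; ring
    _ = (∑ r ∈ S.G.R, K r * toR r.2 i) - ∑ r ∈ S.G.R, K r * toR r.1 i :=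
        Finset.sum_sub_distrib _ _
    _ = 0 := by rw [← tele, sub_self]

/-- Uniqueness of positive equilibria within a stoichiometric compatibility class. -/
lemma uniq (hc : ∀ i, 0 < c i) (hcb : Det.ComplexBalanced S.detKin c)
    {z₁ z₂ : Fin n → ℝ} (h1 : ∀ i, 0 < z₁ i) (h2 : ∀ i, 0 < z₂ i)
    (he1 : Det.IsEquilibrium S.detKin z₁) (he2 : Det.IsEquilibrium S.detKin z₂)
    (hS : z₁ - z₂ ∈ stoichSubspace S.G) : z₁ = z₂ := by
  have span_perp : ∀ (μ : Fin n → ℝ),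
      (∀ r ∈ S.G.R, dot μ (toR r.2) = dot μ (toR r.1)) →
      ∀ x ∈ stoichSubspace S.G, dot μ x = 0 := by
    intro μ hμ x hx
    have hle : stoichSubspace S.G ≤ LinearMap.ker (lmap μ) := by
      rw [stoichSubspace, Submodule.span_le]
      rintro _ ⟨r, hr, rfl⟩
      simp only [SetLike.mem_coe, LinearMap.mem_ker]
      show dot μ (toR r.2 - toR r.1) = 0
      rw [dot_sub, hμ r hr, sub_self]
    exact hle hx
  have hp1 := (core hc hcb (fun i => (h1 i).le) he1).1
  have hp2 := (core hc hcb (fun i => (h2 i).le) he2).1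
  have hx1 := span_perp (mu c z₁) (fun r hr => hp1 r hr (ok_of_pos h1 _)) _ hS
  have hx2 := span_perp (mu c z₂) (fun r hr => hp2 r hr (ok_of_pos h2 _)) _ hS
  have hsum0 : ∑ i, (Real.log (z₁ i) - Real.log (z₂ i)) * (z₁ i - z₂ i) = 0 := by
    have e : ∑ i, (Real.log (z₁ i) - Real.log (z₂ i)) * (z₁ i - z₂ i)
        = dot (mu c z₁) (z₁ - z₂) - dot (mu c z₂) (z₁ - z₂) := by
      rw [dot, dot, ← Finset.sum_sub_distrib]
      refine Finset.sum_congr rfl fun i _ => ?_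
      rw [mu_eq_log hc h1, mu_eq_log hc h2, Pi.sub_apply]
      ring
    rw [e, hx1, hx2, sub_self]
  have hnn : ∀ i ∈ Finset.univ,
      0 ≤ (Real.log (z₁ i) - Real.log (z₂ i)) * (z₁ i - z₂ i) := by
    intro i _
    rcases lt_trichotomy (z₁ i) (z₂ i) with h | h | h
    · have := Real.log_lt_log (h1 i) h
      nlinarith
    · rw [h]; ring_nf; rfl
    · have := Real.log_lt_log (h2 i) h
      nlinarith
  have hzero := (Finset.sum_eq_zero_iff_of_nonneg hnn).mp hsum0
  funext i
  have hi := hzero i (Finset.mem_univ i)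
  rcases lt_trichotomy (z₁ i) (z₂ i) with h | h | h
  · have := Real.log_lt_log (h1 i) h
    nlinarith
  · exact h
  · have := Real.log_lt_log (h2 i) h
    nlinarith


/-- The per-coordinate entropy function. -/
def g (A t : ℝ) : ℝ := t * Real.log t - (A + 1) * t

lemma g_cont (A : ℝ) : Continuous (g A) :=
  Real.continuous_mul_log.sub (continuous_const.mul continuous_id)

lemma g_hasDerivAt (A : ℝ) {t : ℝ} (ht : t ≠ 0) :
    HasDerivAt (g A) (Real.log t - A) t := by
  have h1 := Real.hasDerivAt_mul_log ht
  have h2 : HasDerivAt (fun t : ℝ => (A + 1) * t) (A + 1) t := by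
    simpa using (hasDerivAt_id t).const_mul (A + 1)
  have := h1.sub h2
  exact this.congr_deriv (by ring)

lemma keyineq (K t : ℝ) (ht : 0 ≤ t) : t * (K - Real.log t) ≤ Real.exp (K - 1) := by
  rcases ht.eq_or_lt with h | h
  · rw [← h, zero_mul]
    exact (Real.exp_pos (K - 1)).le
  · have hlog := Real.log_le_sub_one_of_pos (div_pos (Real.exp_pos (K - 1)) h)
    rw [Real.log_div (Real.exp_ne_zero _) h.ne', Real.log_exp] at hlog
    have h2 : K - Real.log t ≤ Real.exp (K - 1) / t := by linarith
    calc t * (K - Real.log t) ≤ t * (Real.exp (K - 1) / t) :=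
          mul_le_mul_of_nonneg_left h2 h.le
      _ = Real.exp (K - 1) := by field_simp

lemma g_lb (A : ℝ) {t : ℝ} (ht : 0 ≤ t) : t - Real.exp (A + 1) ≤ g A t := by
  have h := keyineq (A + 2) t ht
  have e : A + 2 - 1 = A + 1 := by ring
  rw [e] at h
  have expand : t * (A + 2 - Real.log t) = (A + 2) * t - t * Real.log t := by ring
  rw [expand] at h
  unfold g
  linarith

/-- slope of `g` along an affine path. -/
def sl (A z d t : ℝ) : ℝ := (g A (z + t * d) - g A z) / t

lemma g_affine_hasDerivAt (A d : ℝ) {z : ℝ} (hz : z ≠ 0) :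
    HasDerivAt (fun t : ℝ => g A (z + t * d)) ((Real.log z - A) * d) 0 := by
  have hin : HasDerivAt (fun t : ℝ => z + t * d) d 0 := by
    simpa using ((hasDerivAt_id (0:ℝ)).mul_const d).const_add z
  have hout : HasDerivAt (g A) (Real.log z - A) (z + 0 * d) := by
    simpa using g_hasDerivAt A hz
  exact hout.comp 0 hin

lemma sl_tendsto (A d : ℝ) {z : ℝ} (hz : z ≠ 0) :
    Filter.Tendsto (sl A z d) (nhdsWithin 0 (Set.Ioi 0)) (nhds ((Real.log z - A) * d)) := by
  have hcomp := g_affine_hasDerivAt A d hz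
  have hslope := hasDerivAt_iff_tendsto_slope.mp hcomp
  have hmono : nhdsWithin (0:ℝ) (Set.Ioi 0) ≤ nhdsWithin 0 {0}ᶜ :=
    nhdsWithin_mono 0 (fun x hx => Set.mem_compl_singleton_iff.mpr (ne_of_gt hx))
  refine Filter.Tendsto.congr' ?_ (hslope.mono_left hmono)
  filter_upwards [self_mem_nhdsWithin] with t ht
  rw [slope_def_field, sl]
  simp

lemma sl_zero_eq (A : ℝ) {d t : ℝ} (hd : 0 < d) (ht : 0 < t) :
    sl A 0 d t = d * Real.log t + (d * Real.log d - (A + 1) * d) := by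
  rw [sl, g, g]
  simp only [zero_add, Real.log_zero, mul_zero, zero_mul, sub_zero]
  rw [Real.log_mul ht.ne' hd.ne']
  field_simp
  ring

variable (S c) in
/-- Existence of a positive equilibrium in a positive compatibility class. -/
lemma exists_pos_equilibrium (hc : ∀ i, 0 < c i) (hcb : Det.ComplexBalanced S.detKin c)
    (v : Fin n → ℝ) {w : Fin n → ℝ} (hwD : w ∈ compatClass S.G v) (hw : ∀ i, 0 < w i) :
    ∃ z, z ∈ compatClass S.G v ∧ (∀ i, 0 < z i) ∧ Det.IsEquilibrium S.detKin z := by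
  classical
  set φ : (Fin n → ℝ) → ℝ := fun x => ∑ i, g (Real.log (c i)) (x i) with hφ
  have hcont : Continuous φ :=
    continuous_finset_sum _ fun i _ => (g_cont _).comp (continuous_apply i)
  have hmemD : ∀ {x : Fin n → ℝ}, x ∈ compatClass S.G v ↔
      x - v ∈ stoichSubspace S.G ∧ ∀ i, 0 ≤ x i := Iff.rfl
  have hDclosed : IsClosed (compatClass S.G v) := by
    have h1 : IsClosed {x : Fin n → ℝ | x - v ∈ stoichSubspace S.G} := by
      have hS : IsClosed (stoichSubspace S.G : Set (Fin n → ℝ)) :=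
        Submodule.closed_of_finiteDimensional _
      exact hS.preimage (continuous_id.sub continuous_const)
    have h2 : IsClosed {x : Fin n → ℝ | ∀ i, 0 ≤ x i} := by
      have e : {x : Fin n → ℝ | ∀ i, 0 ≤ x i} = ⋂ i, {x | 0 ≤ x i} := by
        ext x; simp [Set.mem_iInter]
      rw [e]
      exact isClosed_iInter fun i => isClosed_le continuous_const (continuous_apply i)
    exact h1.inter h2
  set B := ∑ i, Real.exp (Real.log (c i) + 1) with hB
  have hlb : ∀ x : Fin n → ℝ, (∀ i, 0 ≤ x i) → ∀ j, x j - B ≤ φ x := by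
    intro x hx j
    have h1 : ∀ i ∈ Finset.univ,
        (if i = j then x i else 0) - Real.exp (Real.log (c i) + 1) ≤
          g (Real.log (c i)) (x i) := by
      intro i _
      have hgl := g_lb (Real.log (c i)) (hx i)
      split_ifs with h
      · exact hgl
      · linarith [hx i]
    calc x j - B
        = ∑ i, ((if i = j then x i else 0) - Real.exp (Real.log (c i) + 1)) := by
          rw [Finset.sum_sub_distrib, Finset.sum_ite_eq' Finset.univ j x]
          simp [hB]
      _ ≤ ∑ i, g (Real.log (c i)) (x i) := Finset.sum_le_sum h1
      _ = φ x := rfl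
  set Kt : Set (Fin n → ℝ) := {x | x ∈ compatClass S.G v ∧ φ x ≤ φ w} with hKt
  have hKtsub : Kt ⊆ Set.Icc (fun _ => 0) (fun _ => φ w + B) := by
    rintro x ⟨hxD, hxφ⟩
    rw [Set.mem_Icc]
    constructor
    · intro i; exact (hmemD.mp hxD).2 i
    · intro i
      have := hlb x (hmemD.mp hxD).2 i
      simp only
      linarith
  have hKtclosed : IsClosed Kt :=
    hDclosed.inter (isClosed_Iic.preimage hcont)
  have hKtcpt : IsCompact Kt := IsCompact.of_isClosed_subset isCompact_Icc hKtclosed hKtsub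
  have hKtne : Kt.Nonempty := ⟨w, hwD, le_refl _⟩
  obtain ⟨z0, hz0K, hz0min⟩ := hKtcpt.exists_isMinOn hKtne hcont.continuousOn
  obtain ⟨hz0D, hz0φ⟩ := hz0K
  have hz0nn : ∀ i, 0 ≤ z0 i := (hmemD.mp hz0D).2
  have hglob : ∀ x ∈ compatClass S.G v, φ z0 ≤ φ x := by
    intro x hx
    by_cases h : φ x ≤ φ w
    · exact hz0min ⟨hx, h⟩
    · exact le_trans hz0φ (le_of_not_ge h)
  have hseg : ∀ t : ℝ, 0 ≤ t → t ≤ 1 →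
      (fun i => z0 i + t * (w i - z0 i)) ∈ compatClass S.G v := by
    intro t ht0 ht1
    refine hmemD.mpr ⟨?_, ?_⟩
    · have e : (fun i => z0 i + t * (w i - z0 i)) - v
          = (z0 - v) + t • ((w - v) - (z0 - v)) := by
        funext i
        simp only [Pi.add_apply, Pi.sub_apply, Pi.smul_apply, smul_eq_mul]
        ring
      rw [e]
      exact Submodule.add_mem _ (hmemD.mp hz0D).1
        (Submodule.smul_mem _ _ (Submodule.sub_mem _ (hmemD.mp hwD).1 (hmemD.mp hz0D).1))
    · intro i
      have h1 := hz0nn i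
      have h2 := (hw i).le
      nlinarith
  -- positivity of the minimizer
  have hpos : ∀ i, 0 < z0 i := by
    by_contra hcon
    push_neg at hcon
    obtain ⟨j, hj⟩ := hcon
    have hj0 : z0 j = 0 := le_antisymm hj (hz0nn j)
    set P : Finset (Fin n) := Finset.univ.filter (fun i => 0 < z0 i) with hP
    set Z : Finset (Fin n) := Finset.univ.filter (fun i => ¬ 0 < z0 i) with hZ
    have hZ0 : ∀ i ∈ Z, z0 i = 0 := fun i hi =>
      le_antisymm (not_lt.mp (Finset.mem_filter.mp hi).2) (hz0nn i)
    have hjZ : j ∈ Z := Finset.mem_filter.mpr ⟨Finset.mem_univ _, not_lt.mpr hj⟩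
    set W : ℝ := ∑ i ∈ Z, (w i - z0 i) with hW
    have hWpos : 0 < W := by
      rw [hW]
      refine Finset.sum_pos (fun i hi => ?_) ⟨j, hjZ⟩
      rw [hZ0 i hi, sub_zero]; exact hw i
    set CZ : ℝ := ∑ i ∈ Z, ((w i - z0 i) * Real.log (w i - z0 i)
        - (Real.log (c i) + 1) * (w i - z0 i)) with hCZ
    -- the total slope function
    have hsplit : ∀ t : ℝ, 0 < t →
        (φ (fun i => z0 i + t * (w i - z0 i)) - φ z0) / t
          = (∑ i ∈ P, sl (Real.log (c i)) (z0 i) (w i - z0 i) t)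
            + (W * Real.log t + CZ) := by
      intro t ht
      have e0 : (φ (fun i => z0 i + t * (w i - z0 i)) - φ z0) / t
          = ∑ i, sl (Real.log (c i)) (z0 i) (w i - z0 i) t := by
        rw [hφ]
        simp only
        rw [← Finset.sum_sub_distrib, Finset.sum_div]
        rfl
      rw [e0, ← Finset.sum_filter_add_sum_filter_not Finset.univ (fun i => 0 < z0 i)
        (fun i => sl (Real.log (c i)) (z0 i) (w i - z0 i) t)]
      congr 1
      have eZ : ∀ i ∈ Z, sl (Real.log (c i)) (z0 i) (w i - z0 i) t
          = (w i - z0 i) * Real.log t + ((w i - z0 i) * Real.log (w i - z0 i)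
            - (Real.log (c i) + 1) * (w i - z0 i)) := by
        intro i hi
        have hz0i := hZ0 i hi
        rw [hz0i]
        have hdi : 0 < w i - 0 := by rw [sub_zero]; exact hw i
        exact sl_zero_eq _ hdi ht
      rw [Finset.sum_congr rfl eZ, Finset.sum_add_distrib, hW, hCZ, Finset.sum_mul]
    -- tendsto atBot
    have htends : Filter.Tendsto
        (fun t => (φ (fun i => z0 i + t * (w i - z0 i)) - φ z0) / t)
        (nhdsWithin 0 (Set.Ioi 0)) Filter.atBot := by
      have hPpart : Filter.Tendsto
          (fun t => ∑ i ∈ P, sl (Real.log (c i)) (z0 i) (w i - z0 i) t)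
          (nhdsWithin 0 (Set.Ioi 0))
          (nhds (∑ i ∈ P, (Real.log (z0 i) - Real.log (c i)) * (w i - z0 i))) := by
        refine tendsto_finset_sum _ fun i hi => ?_
        exact sl_tendsto _ _ (ne_of_gt (Finset.mem_filter.mp hi).2)
      have hZpart : Filter.Tendsto (fun t : ℝ => W * Real.log t + CZ)
          (nhdsWithin 0 (Set.Ioi 0)) Filter.atBot := by
        refine Filter.tendsto_atBot_add_const_right _ CZ ?_
        exact Filter.Tendsto.const_mul_atBot hWpos Real.tendsto_log_nhdsGT_zero
      have := hPpart.add_atBot hZpart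
      refine this.congr' ?_
      filter_upwards [self_mem_nhdsWithin] with t ht
      exact (hsplit t ht).symm
    have hev : ∀ᶠ t in nhdsWithin (0:ℝ) (Set.Ioi 0),
        (φ (fun i => z0 i + t * (w i - z0 i)) - φ z0) / t < 0 ∧ t ∈ Set.Ioo (0:ℝ) 1 := by
      refine Filter.Eventually.and ?_ ?_
      · exact htends.eventually (Filter.eventually_lt_atBot 0)
      · exact Filter.eventually_of_mem
          (Ioo_mem_nhdsGT_of_mem (Set.mem_Ico.mpr ⟨le_refl 0, zero_lt_one⟩)) (fun t ht => ht)
    obtain ⟨t, ht1, ht2⟩ := hev.exists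
    obtain ⟨ht0, ht01⟩ := ht2
    have hmem := hseg t ht0.le ht01.le
    have hlt : φ (fun i => z0 i + t * (w i - z0 i)) < φ z0 := by
      rw [div_lt_iff₀ ht0, zero_mul] at ht1
      linarith
    exact absurd (hglob _ hmem) (not_le.mpr hlt)
  -- critical point: orthogonality along reaction vectors
  have hcrit : ∀ r ∈ S.G.R, dot (mu c z0) (toR r.2) = dot (mu c z0) (toR r.1) := by
    intro r hr
    set s : Fin n → ℝ := fun i => toR r.2 i - toR r.1 i with hs
    have hsS : (toR r.2 - toR r.1) ∈ stoichSubspace S.G :=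
      Submodule.subset_span ⟨r, hr, rfl⟩
    have hloc : IsLocalMin (fun t : ℝ => φ (fun i => z0 i + t * s i)) 0 := by
      have hevpos : ∀ᶠ t in nhds (0:ℝ), ∀ i, 0 < z0 i + t * s i := by
        rw [Filter.eventually_all]
        intro i
        have hco : Continuous (fun t : ℝ => z0 i + t * s i) :=
          continuous_const.add (continuous_id.mul continuous_const)
        have htd : Filter.Tendsto (fun t : ℝ => z0 i + t * s i) (nhds 0) (nhds (z0 i)) := by
          have := hco.tendsto 0
          simpa using this
        exact htd.eventually (eventually_gt_nhds (hpos i))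
      refine Filter.Eventually.mono hevpos fun t hat => ?_
      have hmem : (fun i => z0 i + t * s i) ∈ compatClass S.G v := by
        refine hmemD.mpr ⟨?_, fun i => (hat i).le⟩
        have e : (fun i => z0 i + t * s i) - v = (z0 - v) + t • (toR r.2 - toR r.1) := by
          funext i
          simp only [Pi.add_apply, Pi.sub_apply, Pi.smul_apply, smul_eq_mul, hs]
          ring
        rw [e]
        exact Submodule.add_mem _ (hmemD.mp hz0D).1 (Submodule.smul_mem _ _ hsS)
      have h0 : (fun i => z0 i + (0:ℝ) * s i) = z0 := by funext i; ring_nf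
      calc φ (fun i => z0 i + (0:ℝ) * s i) = φ z0 := by rw [h0]
        _ ≤ φ (fun i => z0 i + t * s i) := hglob _ hmem
    have hder : HasDerivAt (fun t : ℝ => φ (fun i => z0 i + t * s i))
        (∑ i, (Real.log (z0 i) - Real.log (c i)) * s i) 0 := by
      rw [hφ]
      simp only
      exact HasDerivAt.fun_sum fun i _ => g_affine_hasDerivAt _ _ (hpos i).ne'
    have hzero := hloc.hasDerivAt_eq_zero hder
    have e : dot (mu c z0) (toR r.2) - dot (mu c z0) (toR r.1)
        = ∑ i, (Real.log (z0 i) - Real.log (c i)) * s i := by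
      rw [dot, dot, ← Finset.sum_sub_distrib]
      refine Finset.sum_congr rfl fun i _ => ?_
      rw [mu_eq_log hc hpos, hs]
      ring
    have := e.trans hzero
    linarith
  exact ⟨z0, hz0D, hpos, equilibrium_of_perp hc hcb hpos hcrit⟩

end MAS

end CBAux

/-- If a deterministic mass action system has a positive complex
balanced state, then every positive stoichiometric compatibility class contains exactly
one positive equilibrium, and every equilibrium is complex balanced. -/
theorem mass_action_complex_balanced_existence_uniqueness {n : ℕ} (S : MASystem n)
    (c : Fin n → ℝ) (hc : ∀ i, 0 < c i) (hcb : Det.ComplexBalanced S.detKin c) :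
    (∀ v : Fin n → ℝ, (∃ z ∈ compatClass S.G v, ∀ i, 0 < z i) →
      ∃! z : Fin n → ℝ,
        z ∈ compatClass S.G v ∧ (∀ i, 0 < z i) ∧ Det.IsEquilibrium S.detKin z) ∧
    ∀ z : Fin n → ℝ, Det.IsEquilibrium S.detKin z → Det.ComplexBalanced S.detKin z := by
  constructor
  · rintro v ⟨w, hwD, hw⟩
    obtain ⟨z, hzD, hzpos, hzeq⟩ := CBAux.exists_pos_equilibrium S c hc hcb v hwD hw
    refine ⟨z, ⟨hzD, hzpos, hzeq⟩, ?_⟩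
    rintro y ⟨hyD, hypos, hyeq⟩
    have hsub : y - z ∈ stoichSubspace S.G := by
      have e : y - z = (y - v) - (z - v) := by abel
      rw [e]
      exact Submodule.sub_mem _ hyD.1 hzD.1
    exact CBAux.uniq hc hcb hypos hzpos hyeq hzeq hsub
  · intro z hzeq
    by_cases hz : ∀ i, 0 ≤ z i
    · exact (CBAux.core hc hcb hz hzeq).2
    · intro y _
      simp [CBAux.rate_of_not_nonneg S hz]
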